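/- The kernel of the natural surjection Γ_n[2] → Γ_{n-k}[2] (induced by fixing the first k standard basis vectors and projecting to the last n−k coordinates) restricted to the subgroup Γ_n[2](k) of matrices fixing v_1,...,v_k is isomorphic to Hom(ℤ^{n-k}, (2ℤ)^k); moreover this exact sequence splits. -/

import Mathlib

open Matrix

/-- The principal level 2 congruence subgroup of `GL(n, ℤ)`. -/
def congruence2 (n : ℕ) : Subgroup (GL (Fin n) ℤ) :=
  (Matrix.GeneralLinearGroup.map (Int.castRingHom (ZMod 2))).ker

variable {n k : ℕ}

def ee (hk : k ≤ n) : Fin k ⊕ Fin (n - k) ≃ Fin n :=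
  finSumFinEquiv.trans (finCongr (Nat.add_sub_cancel' hk))

lemma ee_inl (hk : k ≤ n) (i : Fin k) : ((ee hk (Sum.inl i)) : ℕ) = i := by
  simp [ee]

lemma ee_inr (hk : k ≤ n) (i : Fin (n - k)) : ((ee hk (Sum.inr i)) : ℕ) = k + i := by
  simp [ee]

lemma ee_symm_apply (hk : k ≤ n) (i : Fin n) (hi : (i : ℕ) < k) :
    (ee hk).symm i = Sum.inl ⟨i, hi⟩ := by
  rw [Equiv.symm_apply_eq]
  exact Fin.ext (by simp [ee_inl])

noncomputable def φ (hk : k ≤ n) :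
    Matrix (Fin n) (Fin n) ℤ ≃ₐ[ℤ] Matrix (Fin k ⊕ Fin (n - k)) (Fin k ⊕ Fin (n - k)) ℤ :=
  Matrix.reindexAlgEquiv ℤ ℤ (ee hk).symm

lemma φ_apply (hk : k ≤ n) (M : Matrix (Fin n) (Fin n) ℤ) (a b : Fin k ⊕ Fin (n - k)) :
    φ hk M a b = M (ee hk a) (ee hk b) := by
  simp [φ]

lemma φ_symm_apply (hk : k ≤ n) (M : Matrix (Fin k ⊕ Fin (n - k)) (Fin k ⊕ Fin (n - k)) ℤ)
    (a b : Fin n) : (φ hk).symm M a b = M ((ee hk).symm a) ((ee hk).symm b) := by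
  simp [φ]

/-- `Γ_n[2](k)`: the subgroup of `Γ_n[2]` of matrices fixing the first `k`
standard basis vectors. -/
def congruence2Fix (n k : ℕ) : Subgroup (GL (Fin n) ℤ) where
  carrier := {g | g ∈ congruence2 n ∧ ∀ i : Fin n, (i : ℕ) < k →
    (g : Matrix (Fin n) (Fin n) ℤ).mulVec (Pi.single i 1) = Pi.single i 1}
  one_mem' := ⟨one_mem _, fun i _ => by rw [Units.val_one, Matrix.one_mulVec]⟩
  mul_mem' := by
    rintro a b ⟨ha, ha'⟩ ⟨hb, hb'⟩
    refine ⟨mul_mem ha hb, fun i hi => ?_⟩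
    have : ((a * b : GL (Fin n) ℤ) : Matrix (Fin n) (Fin n) ℤ) =
        (a : Matrix (Fin n) (Fin n) ℤ) * (b : Matrix (Fin n) (Fin n) ℤ) := rfl
    rw [this, ← Matrix.mulVec_mulVec, hb' i hi, ha' i hi]
  inv_mem' := by
    rintro a ⟨ha, ha'⟩
    refine ⟨inv_mem ha, fun i hi => ?_⟩
    have h1 : ((a⁻¹ : GL (Fin n) ℤ) : Matrix (Fin n) (Fin n) ℤ) *
        (a : Matrix (Fin n) (Fin n) ℤ) = 1 := by
      rw [← Units.val_mul, inv_mul_cancel, Units.val_one]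
    calc ((a⁻¹ : GL (Fin n) ℤ) : Matrix (Fin n) (Fin n) ℤ).mulVec
          (Pi.single i 1)
        = ((a⁻¹ : GL (Fin n) ℤ) : Matrix (Fin n) (Fin n) ℤ).mulVec
          ((a : Matrix (Fin n) (Fin n) ℤ).mulVec (Pi.single i 1)) := by
          rw [ha' i hi]
      _ = Pi.single i 1 := by rw [Matrix.mulVec_mulVec, h1, Matrix.one_mulVec]


/-- column fixing condition -/
def Fixes (hk : k ≤ n) (M : Matrix (Fin n) (Fin n) ℤ) : Prop :=
  ∀ i : Fin n, (i : ℕ) < k → M.mulVec (Pi.single i 1) = Pi.single i 1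

lemma fixes_iff_entries (hk : k ≤ n) (M : Matrix (Fin n) (Fin n) ℤ) :
    Fixes hk M ↔ ∀ (r : Fin n) (i : Fin n), (i : ℕ) < k →
      M r i = if r = i then 1 else 0 := by
  constructor
  · intro h r i hi
    have := congrFun (h i hi) r
    rw [Matrix.mulVec_single] at this
    simp only [MulOpposite.op_one, one_smul, Matrix.col_apply] at this
    rw [this, Pi.single_apply]
  · intro h i hi
    funext r
    rw [Matrix.mulVec_single]
    simp only [MulOpposite.op_one, one_smul, Matrix.col_apply]
    rw [h r i hi, Pi.single_apply]

def Bmat (hk : k ≤ n) (M : Matrix (Fin n) (Fin n) ℤ) : Matrix (Fin k) (Fin (n - k)) ℤ :=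
  Matrix.of fun i j => M (ee hk (Sum.inl i)) (ee hk (Sum.inr j))

def Dmat (hk : k ≤ n) (M : Matrix (Fin n) (Fin n) ℤ) : Matrix (Fin (n - k)) (Fin (n - k)) ℤ :=
  Matrix.of fun i j => M (ee hk (Sum.inr i)) (ee hk (Sum.inr j))

lemma block_of_fixes (hk : k ≤ n) {M : Matrix (Fin n) (Fin n) ℤ} (h : Fixes hk M) :
    φ hk M = Matrix.fromBlocks 1 (Bmat hk M) 0 (Dmat hk M) := by
  rw [fixes_iff_entries] at h
  ext a b
  rcases a with i | i <;> rcases b with j | j <;>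
    simp only [φ_apply, Matrix.fromBlocks_apply₁₁, Matrix.fromBlocks_apply₁₂,
      Matrix.fromBlocks_apply₂₁, Matrix.fromBlocks_apply₂₂, Bmat, Dmat, Matrix.of_apply]
  · rw [h _ _ (by rw [ee_inl]; exact j.isLt), Matrix.one_apply]
    congr 1
    simp [Equiv.apply_eq_iff_eq]
  · rw [h _ _ (by rw [ee_inl]; exact j.isLt), if_neg]
    · rfl
    · intro hEq
      exact (Sum.inr_ne_inl) ((ee hk).injective hEq)

lemma fixes_of_block (hk : k ≤ n) {M : Matrix (Fin n) (Fin n) ℤ}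
    {B : Matrix (Fin k) (Fin (n - k)) ℤ} {D : Matrix (Fin (n - k)) (Fin (n - k)) ℤ}
    (h : φ hk M = Matrix.fromBlocks 1 B 0 D) : Fixes hk M := by
  rw [fixes_iff_entries]
  intro r i hi
  have hM : M = (φ hk).symm (Matrix.fromBlocks 1 B 0 D) := by
    rw [← h]; simp
  rw [hM, φ_symm_apply, ee_symm_apply hk i hi]
  rcases h' : (ee hk).symm r with a | a
  · rw [Matrix.fromBlocks_apply₁₁, Matrix.one_apply]
    have : r = ee hk (Sum.inl a) := by rw [← h']; simp
    subst this
    by_cases hai : a = ⟨(i : ℕ), hi⟩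
    · rw [if_pos hai, if_pos]
      rw [hai]; exact Fin.ext (by simp [ee_inl])
    · rw [if_neg hai, if_neg]
      intro hEq
      apply hai
      have : Sum.inl a = (ee hk).symm i := by rw [← hEq]; simp
      rw [ee_symm_apply hk i hi] at this
      exact Sum.inl_injective this
  · rw [Matrix.fromBlocks_apply₂₁, if_neg, Matrix.zero_apply]
    intro hEq
    subst hEq
    rw [ee_symm_apply hk _ hi] at h'
    exact Sum.inl_ne_inr h'

lemma evenInt_iff (x : ℤ) : Even x ↔ (x : ZMod 2) = 0 := by
  rw [show ((x : ZMod 2) = (0 : ZMod 2)) ↔ ((2 : ℤ) ∣ x) from by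
    have := ZMod.intCast_zmod_eq_zero_iff_dvd x 2
    simpa using this]
  constructor
  · rintro ⟨c, rfl⟩; exact ⟨c, by ring⟩
  · rintro ⟨c, rfl⟩; exact ⟨c, by ring⟩

lemma hom_apply_eq {m k : ℕ} (f : (Fin m → ℤ) →+ (Fin k → ℤ)) (v : Fin m → ℤ) (i : Fin k) :
    f v i = ∑ j, f (Pi.single j 1) i * v j := by
  conv_lhs => rw [← Finset.univ_sum_single v, map_sum]
  rw [Finset.sum_apply]
  refine Finset.sum_congr rfl fun j _ => ?_
  have : Pi.single j (v j) = v j • (Pi.single j (1 : ℤ) : Fin m → ℤ) := by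
    funext a
    rw [Pi.smul_apply, Pi.single_apply, Pi.single_apply, smul_eq_mul]
    split <;> simp
  rw [this, map_zsmul, Pi.smul_apply, smul_eq_mul, mul_comm]

lemma mulVec_hom {m k : ℕ} (f : (Fin m → ℤ) →+ (Fin k → ℤ)) (v : Fin m → ℤ) :
    (Matrix.of fun i j => f (Pi.single j 1) i).mulVec v = f v := by
  funext i
  rw [hom_apply_eq f v i]
  simp [Matrix.mulVec, dotProduct]

lemma mem_congruence2_iff' (g : GL (Fin n) ℤ) :
    g ∈ congruence2 n ↔ (g : Matrix (Fin n) (Fin n) ℤ).map (Int.cast : ℤ → ZMod 2) = 1 := by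
  rw [congruence2, MonoidHom.mem_ker, Units.ext_iff]
  rfl

lemma map_cast_one : (1 : Matrix (Fin n) (Fin n) ℤ).map (Int.cast : ℤ → ZMod 2) = 1 :=
  Matrix.map_one _ Int.cast_zero Int.cast_one

lemma φ_symm_map_cast (hk : k ≤ n)
    (X : Matrix (Fin k ⊕ Fin (n - k)) (Fin k ⊕ Fin (n - k)) ℤ)
    (hX : X.map (Int.cast : ℤ → ZMod 2) = 1) :
    ((φ hk).symm X).map (Int.cast : ℤ → ZMod 2) = 1 := by
  have : ((φ hk).symm X).map (Int.cast : ℤ → ZMod 2) =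
      (X.map (Int.cast : ℤ → ZMod 2)).submatrix ((ee hk).symm) ((ee hk).symm) := by
    ext a b
    rw [Matrix.map_apply, φ_symm_apply, Matrix.submatrix_apply, Matrix.map_apply]
  rw [this, hX, Matrix.submatrix_one_equiv]

/-- toBlocks characterizations -/
lemma Bmat_eq (hk : k ≤ n) (M : Matrix (Fin n) (Fin n) ℤ) :
    Bmat hk M = (φ hk M).toBlocks₁₂ := by
  ext i j; rw [Bmat, Matrix.of_apply, Matrix.toBlocks₁₂, Matrix.of_apply, φ_apply]

lemma Dmat_eq (hk : k ≤ n) (M : Matrix (Fin n) (Fin n) ℤ) :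
    Dmat hk M = (φ hk M).toBlocks₂₂ := by
  ext i j; rw [Dmat, Matrix.of_apply, Matrix.toBlocks₂₂, Matrix.of_apply, φ_apply]

lemma blocks_mul (hk : k ≤ n) {M N : Matrix (Fin n) (Fin n) ℤ}
    {B B' : Matrix (Fin k) (Fin (n - k)) ℤ} {D D' : Matrix (Fin (n - k)) (Fin (n - k)) ℤ}
    (hM : φ hk M = Matrix.fromBlocks 1 B 0 D) (hN : φ hk N = Matrix.fromBlocks 1 B' 0 D') :
    φ hk (M * N) = Matrix.fromBlocks 1 (B' + B * D') 0 (D * D') := by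
  rw [_root_.map_mul, hM, hN, Matrix.fromBlocks_multiply]
  congr 1 <;> simp

lemma one_entry_ee (hk : k ≤ n) (a b : Fin k ⊕ Fin (n - k)) :
    (1 : Matrix (Fin n) (Fin n) (ZMod 2)) (ee hk a) (ee hk b) =
      (1 : Matrix (Fin k ⊕ Fin (n - k)) (Fin k ⊕ Fin (n - k)) (ZMod 2)) a b := by
  rw [Matrix.one_apply, Matrix.one_apply]
  simp [Equiv.apply_eq_iff_eq]

lemma unit_DD (hk : k ≤ n) (g : congruence2Fix n k) :
    Dmat hk ((g : GL (Fin n) ℤ) : Matrix (Fin n) (Fin n) ℤ) *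
      Dmat hk (((g⁻¹ : congruence2Fix n k) : GL (Fin n) ℤ) : Matrix (Fin n) (Fin n) ℤ) = 1 := by
  have hb1 := block_of_fixes hk g.2.2
  have hb2 := block_of_fixes hk (g⁻¹ : congruence2Fix n k).2.2
  have hmul : ((g : GL (Fin n) ℤ) : Matrix (Fin n) (Fin n) ℤ) *
      (((g⁻¹ : congruence2Fix n k) : GL (Fin n) ℤ) : Matrix (Fin n) (Fin n) ℤ) = 1 := by
    rw [show ((g⁻¹ : congruence2Fix n k) : GL (Fin n) ℤ) = ((g : GL (Fin n) ℤ))⁻¹ from rfl,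
      ← Units.val_mul, mul_inv_cancel, Units.val_one]
  have h := blocks_mul hk hb1 hb2
  rw [hmul, _root_.map_one, ← Matrix.fromBlocks_one] at h
  have := congrArg Matrix.toBlocks₂₂ h.symm
  rwa [Matrix.toBlocks_fromBlocks₂₂, Matrix.toBlocks_fromBlocks₂₂] at this

lemma unit_DD' (hk : k ≤ n) (g : congruence2Fix n k) :
    Dmat hk (((g⁻¹ : congruence2Fix n k) : GL (Fin n) ℤ) : Matrix (Fin n) (Fin n) ℤ) *
      Dmat hk ((g : GL (Fin n) ℤ) : Matrix (Fin n) (Fin n) ℤ) = 1 := by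
  have := unit_DD hk g⁻¹
  rwa [inv_inv] at this

lemma Dmat_mem_congruence2 (hk : k ≤ n) {g : GL (Fin n) ℤ} (hg : g ∈ congruence2 n) :
    (Dmat hk (g : Matrix (Fin n) (Fin n) ℤ)).map (Int.cast : ℤ → ZMod 2) = 1 := by
  rw [mem_congruence2_iff'] at hg
  ext i j
  have := congrFun (congrFun hg (ee hk (Sum.inr i))) (ee hk (Sum.inr j))
  rw [Matrix.map_apply] at this
  rw [Matrix.map_apply, Dmat, Matrix.of_apply, this, one_entry_ee hk]
  rw [Matrix.one_apply, Matrix.one_apply]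
  simp

def πhom (hk : k ≤ n) : congruence2Fix n k →* congruence2 (n - k) where
  toFun g := ⟨⟨Dmat hk ((g : GL (Fin n) ℤ) : Matrix (Fin n) (Fin n) ℤ),
      Dmat hk (((g⁻¹ : congruence2Fix n k) : GL (Fin n) ℤ) : Matrix (Fin n) (Fin n) ℤ),
      unit_DD hk g, unit_DD' hk g⟩, by
    rw [mem_congruence2_iff']
    exact Dmat_mem_congruence2 hk g.2.1⟩
  map_one' := by
    apply Subtype.ext
    apply Units.ext
    show Dmat hk _ = _
    rw [Dmat_eq, show (((1 : congruence2Fix n k) : GL (Fin n) ℤ) : Matrix (Fin n) (Fin n) ℤ)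
      = 1 from rfl, _root_.map_one, ← Matrix.fromBlocks_one, Matrix.toBlocks_fromBlocks₂₂]
    rfl
  map_mul' := by
    intro a b
    apply Subtype.ext
    apply Units.ext
    show Dmat hk _ = Dmat hk _ * Dmat hk _
    rw [show (((a * b : congruence2Fix n k) : GL (Fin n) ℤ) : Matrix (Fin n) (Fin n) ℤ)
      = ((a : GL (Fin n) ℤ) : Matrix (Fin n) (Fin n) ℤ) *
        ((b : GL (Fin n) ℤ) : Matrix (Fin n) (Fin n) ℤ) from rfl]
    rw [Dmat_eq, blocks_mul hk (block_of_fixes hk a.2.2) (block_of_fixes hk b.2.2),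
      Matrix.toBlocks_fromBlocks₂₂, Dmat_eq, Dmat_eq, block_of_fixes hk a.2.2,
      block_of_fixes hk b.2.2, Matrix.toBlocks_fromBlocks₂₂, Matrix.toBlocks_fromBlocks₂₂]

lemma blk_mul {B B' : Matrix (Fin k) (Fin (n - k)) ℤ}
    {D D' : Matrix (Fin (n - k)) (Fin (n - k)) ℤ} :
    Matrix.fromBlocks (1 : Matrix (Fin k) (Fin k) ℤ) B (0 : Matrix (Fin (n - k)) (Fin k) ℤ) D *
      Matrix.fromBlocks (1 : Matrix (Fin k) (Fin k) ℤ) B' (0 : Matrix (Fin (n - k)) (Fin k) ℤ) D' =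
      Matrix.fromBlocks 1 (B' + B * D') 0 (D * D') := by
  rw [Matrix.fromBlocks_multiply]
  congr 1 <;> simp

noncomputable def blkUnit (hk : k ≤ n) (B : Matrix (Fin k) (Fin (n - k)) ℤ) (D : GL (Fin (n - k)) ℤ) :
    GL (Fin n) ℤ where
  val := (φ hk).symm (Matrix.fromBlocks 1 B 0 (D : Matrix (Fin (n - k)) (Fin (n - k)) ℤ))
  inv := (φ hk).symm (Matrix.fromBlocks 1 (-(B * ((D⁻¹ : GL (Fin (n - k)) ℤ) :
    Matrix (Fin (n - k)) (Fin (n - k)) ℤ))) 0 ((D⁻¹ : GL (Fin (n - k)) ℤ) :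
    Matrix (Fin (n - k)) (Fin (n - k)) ℤ))
  val_inv := by
    rw [← _root_.map_mul, blk_mul, neg_add_cancel,
      show ((D : Matrix (Fin (n - k)) (Fin (n - k)) ℤ)) *
        ((D⁻¹ : GL (Fin (n - k)) ℤ) : Matrix (Fin (n - k)) (Fin (n - k)) ℤ) = 1 from by
        rw [← Units.val_mul, mul_inv_cancel, Units.val_one],
      Matrix.fromBlocks_one, _root_.map_one]
  inv_val := by
    rw [← _root_.map_mul, blk_mul, Matrix.neg_mul, Matrix.mul_assoc,
      show ((D⁻¹ : GL (Fin (n - k)) ℤ) : Matrix (Fin (n - k)) (Fin (n - k)) ℤ) *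
        ((D : Matrix (Fin (n - k)) (Fin (n - k)) ℤ)) = 1 from by
        rw [← Units.val_mul, inv_mul_cancel, Units.val_one],
      Matrix.mul_one, add_neg_cancel, Matrix.fromBlocks_one, _root_.map_one]

lemma blkUnit_block (hk : k ≤ n) (B : Matrix (Fin k) (Fin (n - k)) ℤ)
    (D : GL (Fin (n - k)) ℤ) :
    φ hk ((blkUnit hk B D : GL (Fin n) ℤ) : Matrix (Fin n) (Fin n) ℤ) =
      Matrix.fromBlocks 1 B 0 (D : Matrix (Fin (n - k)) (Fin (n - k)) ℤ) := by
  show φ hk ((φ hk).symm _) = _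
  simp

lemma blkUnit_mem_fix (hk : k ≤ n) {B : Matrix (Fin k) (Fin (n - k)) ℤ}
    {D : GL (Fin (n - k)) ℤ} (hB : B.map (Int.cast : ℤ → ZMod 2) = 0)
    (hD : D ∈ congruence2 (n - k)) :
    blkUnit hk B D ∈ congruence2Fix n k := by
  refine ⟨?_, fixes_of_block hk (blkUnit_block hk B D)⟩
  rw [mem_congruence2_iff']
  show ((φ hk).symm _).map _ = _
  apply φ_symm_map_cast
  rw [Matrix.fromBlocks_map, hB]
  rw [mem_congruence2_iff'] at hD
  rw [hD, map_cast_one]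
  rw [show (0 : Matrix (Fin (n - k)) (Fin k) ℤ).map (Int.cast : ℤ → ZMod 2) = 0 from
    Matrix.map_zero _ Int.cast_zero, Matrix.fromBlocks_one]

lemma Dmat_blkUnit (hk : k ≤ n) (B : Matrix (Fin k) (Fin (n - k)) ℤ)
    (D : GL (Fin (n - k)) ℤ) :
    Dmat hk ((blkUnit hk B D : GL (Fin n) ℤ) : Matrix (Fin n) (Fin n) ℤ) =
      (D : Matrix (Fin (n - k)) (Fin (n - k)) ℤ) := by
  rw [Dmat_eq, blkUnit_block, Matrix.toBlocks_fromBlocks₂₂]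

lemma Bmat_blkUnit (hk : k ≤ n) (B : Matrix (Fin k) (Fin (n - k)) ℤ)
    (D : GL (Fin (n - k)) ℤ) :
    Bmat hk ((blkUnit hk B D : GL (Fin n) ℤ) : Matrix (Fin n) (Fin n) ℤ) = B := by
  rw [Bmat_eq, blkUnit_block, Matrix.toBlocks_fromBlocks₁₂]

noncomputable def shom (hk : k ≤ n) : congruence2 (n - k) →* congruence2Fix n k where
  toFun D := ⟨blkUnit hk 0 (D : GL (Fin (n - k)) ℤ),
    blkUnit_mem_fix hk (Matrix.map_zero _ Int.cast_zero) D.2⟩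
  map_one' := by
    apply Subtype.ext
    apply Units.ext
    show (φ hk).symm _ = _
    rw [show (((1 : congruence2 (n - k)) : GL (Fin (n - k)) ℤ) :
      Matrix (Fin (n - k)) (Fin (n - k)) ℤ) = 1 from rfl, Matrix.fromBlocks_one, _root_.map_one]
    rfl
  map_mul' := by
    intro a b
    apply Subtype.ext
    apply Units.ext
    show (φ hk).symm _ = (φ hk).symm _ * (φ hk).symm _
    rw [← _root_.map_mul, blk_mul,
      show (0 : Matrix (Fin k) (Fin (n - k)) ℤ) + (0 : Matrix (Fin k) (Fin (n - k)) ℤ) *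
        ((b : GL (Fin (n - k)) ℤ) : Matrix (Fin (n - k)) (Fin (n - k)) ℤ) = 0 from by simp]
    rfl

lemma πhom_shom (hk : k ≤ n) : (πhom hk).comp (shom hk) = MonoidHom.id _ := by
  ext D : 1
  apply Subtype.ext
  apply Units.ext
  show Dmat hk ((blkUnit hk 0 (D : GL (Fin (n - k)) ℤ) : GL (Fin n) ℤ) :
    Matrix (Fin n) (Fin n) ℤ) = _
  rw [Dmat_blkUnit]
  rfl

/-- The additive group `Hom(ℤ^{n-k}, (2ℤ)^k)`: additive homomorphisms
`ℤ^{n-k} → ℤ^k` all of whose values have even coordinates. -/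
def evenHoms (n k : ℕ) : AddSubgroup ((Fin (n - k) → ℤ) →+ (Fin k → ℤ)) where
  carrier := {f | ∀ v i, Even (f v i)}
  zero_mem' := fun v i => by simp
  add_mem' := by
    intro f g hf hg v i
    simpa using (hf v i).add (hg v i)
  neg_mem' := by
    intro f hf v i
    simpa using (hf v i).neg


lemma Bmat_even (hk : k ≤ n) {g : GL (Fin n) ℤ} (hg : g ∈ congruence2 n)
    (i : Fin k) (j : Fin (n - k)) :
    Even (Bmat hk (g : Matrix (Fin n) (Fin n) ℤ) i j) := by
  rw [mem_congruence2_iff'] at hg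
  rw [evenInt_iff]
  have := congrFun (congrFun hg (ee hk (Sum.inl i))) (ee hk (Sum.inr j))
  rw [Matrix.map_apply] at this
  rw [Bmat, Matrix.of_apply, this, one_entry_ee, Matrix.one_apply_ne]
  exact Sum.inl_ne_inr

lemma ker_D (hk : k ≤ n) (g : (πhom hk).ker) :
    Dmat hk (((g : congruence2Fix n k) : GL (Fin n) ℤ) : Matrix (Fin n) (Fin n) ℤ) = 1 := by
  have hg := g.2
  rw [MonoidHom.mem_ker] at hg
  have h2 : ((πhom hk (g : congruence2Fix n k) : GL (Fin (n - k)) ℤ) :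
      Matrix (Fin (n - k)) (Fin (n - k)) ℤ) = 1 := by rw [hg]; rfl
  exact h2

lemma Bmat_mul_ker (hk : k ≤ n) (a b : (πhom hk).ker) :
    Bmat hk ((((a * b : (πhom hk).ker) : congruence2Fix n k) : GL (Fin n) ℤ) :
        Matrix (Fin n) (Fin n) ℤ) =
      Bmat hk (((a : congruence2Fix n k) : GL (Fin n) ℤ) : Matrix (Fin n) (Fin n) ℤ) +
      Bmat hk (((b : congruence2Fix n k) : GL (Fin n) ℤ) : Matrix (Fin n) (Fin n) ℤ) := by
  rw [Bmat_eq,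
    show ((((a * b : (πhom hk).ker) : congruence2Fix n k) : GL (Fin n) ℤ) :
        Matrix (Fin n) (Fin n) ℤ) =
      (((a : congruence2Fix n k) : GL (Fin n) ℤ) : Matrix (Fin n) (Fin n) ℤ) *
      (((b : congruence2Fix n k) : GL (Fin n) ℤ) : Matrix (Fin n) (Fin n) ℤ) from rfl,
    blocks_mul hk (block_of_fixes hk (a : congruence2Fix n k).2.2)
      (block_of_fixes hk (b : congruence2Fix n k).2.2),
    Matrix.toBlocks_fromBlocks₁₂, ker_D hk b, Matrix.mul_one, add_comm]

noncomputable def θ (hk : k ≤ n) : (πhom hk).ker →* Multiplicative (evenHoms n k) :=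
  MonoidHom.mk' (fun g => Multiplicative.ofAdd
    (⟨(Matrix.mulVecLin (Bmat hk (((g : congruence2Fix n k) : GL (Fin n) ℤ) :
        Matrix (Fin n) (Fin n) ℤ))).toAddMonoidHom, by
      intro v i
      rw [evenInt_iff]
      show ((Matrix.mulVec _ v i : ℤ) : ZMod 2) = 0
      rw [Matrix.mulVec, dotProduct]
      push_cast
      refine Finset.sum_eq_zero fun j _ => ?_
      rw [(evenInt_iff _).1 (Bmat_even hk (g : congruence2Fix n k).2.1 i j), zero_mul]⟩ :
      evenHoms n k))
    (by
      intro a b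
      show Multiplicative.ofAdd _ = Multiplicative.ofAdd (_ + _)
      apply congrArg
      apply Subtype.ext
      apply AddMonoidHom.ext
      intro v
      show Matrix.mulVec _ v = Matrix.mulVec _ v + Matrix.mulVec _ v
      rw [Bmat_mul_ker hk a b, Matrix.add_mulVec])

lemma θ_injective (hk : k ≤ n) : Function.Injective (θ hk) := by
  rw [injective_iff_map_eq_one]
  intro g hg
  have hB : Bmat hk (((g : congruence2Fix n k) : GL (Fin n) ℤ) :
      Matrix (Fin n) (Fin n) ℤ) = 0 := by
    have h1 : (Matrix.mulVecLin (Bmat hk (((g : congruence2Fix n k) : GL (Fin n) ℤ) :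
        Matrix (Fin n) (Fin n) ℤ))).toAddMonoidHom = 0 := by
      have := congrArg (fun x : Multiplicative (evenHoms n k) =>
        ((Multiplicative.toAdd x : evenHoms n k) : (Fin (n - k) → ℤ) →+ (Fin k → ℤ))) hg
      exact this
    ext i j
    have h2 := congrFun (congrArg (fun f : (Fin (n - k) → ℤ) →+ (Fin k → ℤ) =>
      f (Pi.single j 1)) h1) i
    simpa [Matrix.mulVec_single] using h2
  have hval : (((g : congruence2Fix n k) : GL (Fin n) ℤ) : Matrix (Fin n) (Fin n) ℤ) = 1 := by
    apply (φ hk).injective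
    rw [block_of_fixes hk (g : congruence2Fix n k).2.2, hB, ker_D hk g,
      Matrix.fromBlocks_one, _root_.map_one]
  apply Subtype.ext
  apply Subtype.ext
  exact Units.ext hval

lemma θ_surjective (hk : k ≤ n) : Function.Surjective (θ hk) := by
  intro f
  set B : Matrix (Fin k) (Fin (n - k)) ℤ :=
    Matrix.of fun i j => (f.toAdd : (Fin (n - k) → ℤ) →+ (Fin k → ℤ)) (Pi.single j 1) i with hB
  have hBcast : B.map (Int.cast : ℤ → ZMod 2) = 0 := by
    ext i j
    rw [Matrix.map_apply, Matrix.zero_apply, ← evenInt_iff]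
    exact f.toAdd.2 (Pi.single j 1) i
  refine ⟨⟨⟨blkUnit hk B 1, blkUnit_mem_fix hk hBcast (one_mem _)⟩, ?_⟩, ?_⟩
  · rw [MonoidHom.mem_ker]
    apply Subtype.ext
    apply Units.ext
    show Dmat hk _ = _
    rw [show ((((⟨blkUnit hk B 1, blkUnit_mem_fix hk hBcast (one_mem _)⟩ :
        congruence2Fix n k) : GL (Fin n) ℤ)) : Matrix (Fin n) (Fin n) ℤ) =
      ((blkUnit hk B 1 : GL (Fin n) ℤ) : Matrix (Fin n) (Fin n) ℤ) from rfl, Dmat_blkUnit]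
    rfl
  · apply Multiplicative.toAdd.injective
    apply Subtype.ext
    apply AddMonoidHom.ext
    intro v
    show Matrix.mulVec (Bmat hk _) v = _
    rw [show Bmat hk ((blkUnit hk B 1 : GL (Fin n) ℤ) : Matrix (Fin n) (Fin n) ℤ) = B from
      Bmat_blkUnit hk B 1]
    rw [hB]
    exact mulVec_hom _ v

/-- The natural surjection `Γ_n[2](k) → Γ_{n-k}[2]` (taking the lower-right
`(n-k) × (n-k)` block) has kernel isomorphic to `Hom(ℤ^{n-k}, (2ℤ)^k)`, and
the resulting short exact sequence splits. -/
theorem congruence2_birman_sequence {n k : ℕ} (hk : k ≤ n) :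
    ∃ π : congruence2Fix n k →* congruence2 (n - k),
      (∀ (g : congruence2Fix n k) (i j : Fin (n - k)),
        (((π g : GL (Fin (n - k)) ℤ)) : Matrix (Fin (n - k)) (Fin (n - k)) ℤ) i j =
          (((g : GL (Fin n) ℤ)) : Matrix (Fin n) (Fin n) ℤ)
            ⟨k + (i : ℕ), by omega⟩ ⟨k + (j : ℕ), by omega⟩) ∧
      Function.Surjective π ∧
      (∃ s : congruence2 (n - k) →* congruence2Fix n k,
        π.comp s = MonoidHom.id _) ∧
      Nonempty (π.ker ≃* Multiplicative (evenHoms n k)) := by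
  refine ⟨πhom hk, ?_, ?_, ⟨shom hk, πhom_shom hk⟩,
    ⟨MulEquiv.ofBijective (θ hk) ⟨θ_injective hk, θ_surjective hk⟩⟩⟩
  · intro g i j
    show Dmat hk _ i j = _
    rw [Dmat, Matrix.of_apply]
    congr 1 <;> exact Fin.ext (by simp [ee_inr])
  · intro D
    exact ⟨shom hk D, DFunLike.congr_fun (πhom_shom hk) D⟩
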